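/- Let (a_n) and (b_n) be sequences of integers related by a_n = Σ_{k|n} k·b_k (equivalently, by Möbius inversion, n·b_n = Σ_{k|n} μ(n/k)·a_k). If b_n ≠ 0 for infinitely many n, then limsup |a_n|^{1/n} = limsup |b_n|^{1/n}. -/

import Mathlib

open Filter ENNReal Finset Topology

private lemma natAbs_sum_le' {ι : Type*} (s : Finset ι) (f : ι → ℤ) :
    (∑ i ∈ s, f i).natAbs ≤ ∑ i ∈ s, (f i).natAbs := by
  have h2 : ((∑ i ∈ s, f i).natAbs : ℤ) ≤ ((∑ i ∈ s, (f i).natAbs : ℕ) : ℤ) := by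
    calc ((∑ i ∈ s, f i).natAbs : ℤ) = |∑ i ∈ s, f i| := (Int.abs_eq_natAbs _).symm
      _ ≤ ∑ i ∈ s, |f i| := Finset.abs_sum_le_sum_abs f s
      _ = ∑ i ∈ s, ((f i).natAbs : ℤ) := Finset.sum_congr rfl fun i _ => Int.abs_eq_natAbs _
      _ = ((∑ i ∈ s, (f i).natAbs : ℕ) : ℤ) := by push_cast; rfl
  exact_mod_cast h2

private lemma log_div_nat : Tendsto (fun n : ℕ => Real.log ((n : ℝ) + 1) / n) atTop (𝓝 0) := by
  have hlog : Tendsto (fun x : ℝ => Real.log x / x) atTop (𝓝 0) := by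
    simpa using Real.tendsto_pow_log_div_mul_add_atTop 1 0 1 one_ne_zero
  have hn1 : Tendsto (fun n : ℕ => (n : ℝ) + 1) atTop atTop :=
    tendsto_atTop_add_const_right _ 1 tendsto_natCast_atTop_atTop
  have h1 : Tendsto (fun n : ℕ => Real.log ((n : ℝ) + 1) / ((n : ℝ) + 1)) atTop (𝓝 0) :=
    hlog.comp hn1
  have h2 : Tendsto (fun n : ℕ => ((n : ℝ) + 1) / n) atTop (𝓝 1) := by
    have h0 : Tendsto (fun n : ℕ => 1 + 1 / (n : ℝ)) atTop (𝓝 1) := by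
      simpa using (tendsto_const_nhds : Tendsto (fun _ : ℕ => (1 : ℝ)) atTop (𝓝 1)).add tendsto_one_div_atTop_nhds_zero_nat
    apply h0.congr'
    filter_upwards [eventually_ge_atTop 1] with n hn
    have hn0 : (n : ℝ) ≠ 0 := by exact_mod_cast Nat.one_le_iff_ne_zero.mp hn
    field_simp
  have h3 := h1.mul h2
  rw [zero_mul] at h3
  apply h3.congr'
  filter_upwards [eventually_ge_atTop 1] with n hn
  have hn0 : (n : ℝ) ≠ 0 := by exact_mod_cast Nat.one_le_iff_ne_zero.mp hn
  field_simp

private lemma aux_poly (K : ℕ) (hK : 1 ≤ K) :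
    Tendsto (fun n : ℕ => ((K * (n + 1) ^ 3 : ℕ) : ℝ≥0∞) ^ (1 / (n : ℝ))) atTop (𝓝 1) := by
  have hpos : ∀ n : ℕ, (0 : ℝ) < ((K * (n + 1) ^ 3 : ℕ) : ℝ) := by
    intro n
    have : 0 < K * (n + 1) ^ 3 := by positivity
    exact_mod_cast this
  have hreal : Tendsto (fun n : ℕ => ((K * (n + 1) ^ 3 : ℕ) : ℝ) ^ (1 / (n : ℝ))) atTop (𝓝 1) := by
    have hexp : Tendsto
        (fun n : ℕ => Real.log ((K * (n + 1) ^ 3 : ℕ) : ℝ) * (1 / (n : ℝ))) atTop (𝓝 0) := by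
      have hrhs : Tendsto
          (fun n : ℕ => Real.log K / n + 3 * (Real.log ((n : ℝ) + 1) / n)) atTop (𝓝 0) := by
        have := (tendsto_const_div_atTop_nhds_zero_nat (Real.log K)).add (log_div_nat.const_mul 3)
        simpa using this
      apply hrhs.congr'
      filter_upwards [eventually_ge_atTop 1] with n hn
      have hK0 : (0 : ℝ) < (K : ℝ) := by exact_mod_cast hK
      have hcast : ((K * (n + 1) ^ 3 : ℕ) : ℝ) = (K : ℝ) * ((n : ℝ) + 1) ^ 3 := by push_cast; ring
      rw [hcast, Real.log_mul (ne_of_gt hK0) (by positivity), Real.log_pow]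
      push_cast
      ring
    have hcomp := (Real.continuous_exp.tendsto 0).comp hexp
    rw [Real.exp_zero] at hcomp
    apply hcomp.congr'
    filter_upwards [eventually_ge_atTop 1] with n hn
    simp only [Function.comp]
    rw [← Real.rpow_def_of_pos (hpos n)]
  have hlift := (ENNReal.continuous_ofReal.tendsto 1).comp hreal
  rw [ENNReal.ofReal_one] at hlift
  apply hlift.congr
  intro n
  simp only [Function.comp]
  rw [← ENNReal.ofReal_rpow_of_nonneg (le_of_lt (hpos n)) (by positivity), ENNReal.ofReal_natCast]

private lemma one_le_limsup_rpow (u : ℕ → ℕ) (h : {n : ℕ | u n ≠ 0}.Infinite) :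
    1 ≤ atTop.limsup (fun n : ℕ => ((u n : ℝ≥0∞)) ^ (1 / (n : ℝ))) := by
  refine le_limsup_of_frequently_le ?_ (isBoundedUnder_of ⟨⊤, fun _ => le_top⟩)
  have hf : ∃ᶠ n in atTop, u n ≠ 0 := Nat.frequently_atTop_iff_infinite.mpr h
  apply hf.mono
  intro n hn
  calc (1 : ℝ≥0∞) = 1 ^ (1 / (n : ℝ)) := (ENNReal.one_rpow _).symm
    _ ≤ (u n : ℝ≥0∞) ^ (1 / (n : ℝ)) := by
        apply ENNReal.rpow_le_rpow _ (by positivity)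
        exact_mod_cast Nat.one_le_iff_ne_zero.mpr hn

private lemma key_le (u v : ℕ → ℕ)
    (h1 : 1 ≤ atTop.limsup (fun n : ℕ => ((v n : ℝ≥0∞)) ^ (1 / (n : ℝ))))
    (hb : ∀ n : ℕ, 1 ≤ n → u n ≤ (n + 1) ^ 2 * ∑ k ∈ range (n + 1), v k) :
    atTop.limsup (fun n : ℕ => ((u n : ℝ≥0∞)) ^ (1 / (n : ℝ)))
      ≤ atTop.limsup (fun n : ℕ => ((v n : ℝ≥0∞)) ^ (1 / (n : ℝ))) := by
  apply le_of_forall_gt_imp_ge_of_dense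
  intro C hC
  rcases eq_or_ne C ⊤ with rfl | hCtop
  · exact le_top
  have hC1 : 1 < C := lt_of_le_of_lt h1 hC
  obtain ⟨N0, hN0⟩ := eventually_atTop.mp (eventually_lt_of_limsup_lt hC)
  set N : ℕ := max N0 1 with hNdef
  have hvC : ∀ k : ℕ, N ≤ k → (v k : ℝ≥0∞) ≤ C ^ k := by
    intro k hk
    have hk1 : 1 ≤ k := le_trans (le_max_right _ _) hk
    have hk0 : (k : ℝ) ≠ 0 := by exact_mod_cast Nat.one_le_iff_ne_zero.mp hk1
    have h := (hN0 k (le_trans (le_max_left _ _) hk)).le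
    have h2 : ((v k : ℝ≥0∞) ^ (1 / (k : ℝ))) ^ (k : ℝ) ≤ C ^ (k : ℝ) :=
      ENNReal.rpow_le_rpow h (by positivity)
    rwa [← ENNReal.rpow_mul, one_div, inv_mul_cancel₀ hk0, ENNReal.rpow_one,
      ENNReal.rpow_natCast] at h2
  set S : ℕ := ∑ k ∈ range N, v k with hSdef
  set K : ℕ := S + 1 with hKdef
  have hpt : ∀ᶠ n : ℕ in atTop,
      (u n : ℝ≥0∞) ^ (1 / (n : ℝ)) ≤ ((K * (n + 1) ^ 3 : ℕ) : ℝ≥0∞) ^ (1 / (n : ℝ)) * C := by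
    filter_upwards [eventually_ge_atTop N] with n hn
    have hn1 : 1 ≤ n := le_trans (le_max_right _ _) hn
    have hn0 : (n : ℝ) ≠ 0 := by exact_mod_cast Nat.one_le_iff_ne_zero.mp hn1
    have hCn1 : (1 : ℝ≥0∞) ≤ C ^ n := one_le_pow_of_one_le' hC1.le n
    have hsplit : ∑ k ∈ range (n + 1), (v k : ℝ≥0∞)
        = (∑ k ∈ range N, (v k : ℝ≥0∞)) + ∑ k ∈ Ico N (n + 1), (v k : ℝ≥0∞) :=
      (Finset.sum_range_add_sum_Ico _ (by omega)).symm
    have hIco : ∑ k ∈ Ico N (n + 1), (v k : ℝ≥0∞) ≤ (n + 1 : ℝ≥0∞) * C ^ n := by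
      calc ∑ k ∈ Ico N (n + 1), (v k : ℝ≥0∞) ≤ ∑ _k ∈ Ico N (n + 1), C ^ n := by
            apply Finset.sum_le_sum
            intro k hk
            obtain ⟨hk1, hk2⟩ := Finset.mem_Ico.mp hk
            exact le_trans (hvC k hk1) (pow_le_pow_right₀ hC1.le (by omega))
        _ = ((Ico N (n + 1)).card : ℝ≥0∞) * C ^ n := by
            rw [Finset.sum_const, nsmul_eq_mul]
        _ ≤ (n + 1 : ℝ≥0∞) * C ^ n := by
            apply mul_le_mul_left
            rw [Nat.card_Ico]
            exact_mod_cast Nat.le_of_lt_succ (by omega : n + 1 - N < n + 2)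
    have hfirst : ∑ k ∈ range N, (v k : ℝ≥0∞) ≤ (S : ℝ≥0∞) := by
      rw [hSdef]; push_cast; exact le_refl _
    have hbig : (u n : ℝ≥0∞) ≤ ((K * (n + 1) ^ 3 : ℕ) : ℝ≥0∞) * C ^ n := by
      calc (u n : ℝ≥0∞) ≤ (((n + 1) ^ 2 * ∑ k ∈ range (n + 1), v k : ℕ) : ℝ≥0∞) := by
            exact_mod_cast hb n hn1
        _ = ((n : ℝ≥0∞) + 1) ^ 2 * ∑ k ∈ range (n + 1), (v k : ℝ≥0∞) := by push_cast; ring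
        _ ≤ ((n : ℝ≥0∞) + 1) ^ 2 * ((S : ℝ≥0∞) + (n + 1 : ℝ≥0∞) * C ^ n) := by
            rw [hsplit]
            exact mul_le_mul_right (add_le_add hfirst hIco) _
        _ ≤ ((n : ℝ≥0∞) + 1) ^ 2 * (((S : ℝ≥0∞) + 1) * ((n + 1 : ℝ≥0∞) * C ^ n)) := by
            apply mul_le_mul_right
            have h1n : (1 : ℝ≥0∞) ≤ (n + 1 : ℝ≥0∞) * C ^ n := by
              calc (1 : ℝ≥0∞) = 1 * 1 := (one_mul _).symm
                _ ≤ (n + 1 : ℝ≥0∞) * C ^ n := mul_le_mul' le_add_self hCn1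
            calc (S : ℝ≥0∞) + (n + 1 : ℝ≥0∞) * C ^ n
                ≤ (S : ℝ≥0∞) * ((n + 1 : ℝ≥0∞) * C ^ n) + (n + 1 : ℝ≥0∞) * C ^ n :=
                  add_le_add_left (le_mul_of_one_le_right' h1n) _
              _ = ((S : ℝ≥0∞) + 1) * ((n + 1 : ℝ≥0∞) * C ^ n) := by ring
        _ = ((K * (n + 1) ^ 3 : ℕ) : ℝ≥0∞) * C ^ n := by
            rw [hKdef]; push_cast; ring
    calc (u n : ℝ≥0∞) ^ (1 / (n : ℝ))
        ≤ (((K * (n + 1) ^ 3 : ℕ) : ℝ≥0∞) * C ^ n) ^ (1 / (n : ℝ)) :=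
          ENNReal.rpow_le_rpow hbig (by positivity)
      _ = ((K * (n + 1) ^ 3 : ℕ) : ℝ≥0∞) ^ (1 / (n : ℝ)) * (C ^ n) ^ (1 / (n : ℝ)) :=
          ENNReal.mul_rpow_of_nonneg _ _ (by positivity)
      _ = ((K * (n + 1) ^ 3 : ℕ) : ℝ≥0∞) ^ (1 / (n : ℝ)) * C := by
          rw [← ENNReal.rpow_natCast C n, ← ENNReal.rpow_mul, mul_one_div,
            div_self hn0, ENNReal.rpow_one]
  have hK1 : 1 ≤ K := by omega
  have htend : Tendsto (fun n : ℕ => ((K * (n + 1) ^ 3 : ℕ) : ℝ≥0∞) ^ (1 / (n : ℝ)) * C)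
      atTop (𝓝 C) := by
    have := ENNReal.Tendsto.mul_const (b := C) (aux_poly K hK1) (Or.inl one_ne_zero)
    simpa using this
  calc atTop.limsup (fun n : ℕ => ((u n : ℝ≥0∞)) ^ (1 / (n : ℝ)))
      ≤ atTop.limsup (fun n : ℕ => ((K * (n + 1) ^ 3 : ℕ) : ℝ≥0∞) ^ (1 / (n : ℝ)) * C) :=
        limsup_le_limsup hpt
    _ = C := htend.limsup_eq

/-- Let `(a_n)`, `(b_n)` be integer sequences with
`a_n = Σ_{k|n} k·b_k` for all `n ≥ 1` (equivalently, by Möbius inversion,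
`n·b_n = Σ_{k|n} μ(n/k)·a_k`).  If `b_n ≠ 0` for infinitely many `n`, then
`limsup |a_n|^{1/n} = limsup |b_n|^{1/n}` (computed in `[0,∞]`). -/
theorem stmt2 (a b : ℕ → ℤ)
    (hab : ∀ n : ℕ, 1 ≤ n → a n = ∑ k ∈ n.divisors, (k : ℤ) * b k)
    (hinf : {n : ℕ | b n ≠ 0}.Infinite) :
    Filter.atTop.limsup (fun n : ℕ => ((a n).natAbs : ℝ≥0∞) ^ (1 / (n : ℝ))) =
      Filter.atTop.limsup (fun n : ℕ => ((b n).natAbs : ℝ≥0∞) ^ (1 / (n : ℝ))) := by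
  -- Möbius inversion
  have hinv : ∀ n : ℕ, 0 < n →
      ∑ x ∈ n.divisorsAntidiagonal, (ArithmeticFunction.moebius x.1 : ℤ) • a x.2
        = (n : ℤ) * b n := by
    have := (ArithmeticFunction.sum_eq_iff_sum_smul_moebius_eq
      (f := fun k : ℕ => (k : ℤ) * b k) (g := a)).mp
    exact fun n hn => this (fun m hm => (hab m hm).symm) n hn
  -- bound on |μ|
  have hmu : ∀ d : ℕ, (ArithmeticFunction.moebius d).natAbs ≤ 1 := by
    intro d
    by_cases h : Squarefree d
    · rw [ArithmeticFunction.moebius_apply_of_squarefree h]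
      simp [Int.natAbs_pow]
    · rw [ArithmeticFunction.moebius_eq_zero_of_not_squarefree h]
      simp
  -- key bound for b in terms of a
  have hnb : ∀ n : ℕ, 1 ≤ n →
      n * (b n).natAbs ≤ ∑ k ∈ range (n + 1), (a k).natAbs := by
    intro n hn
    have h1 : n * (b n).natAbs = ((n : ℤ) * b n).natAbs := by
      rw [Int.natAbs_mul, Int.natAbs_natCast]
    rw [h1, ← hinv n hn]
    calc (∑ x ∈ n.divisorsAntidiagonal,
            (ArithmeticFunction.moebius x.1 : ℤ) • a x.2).natAbs
        ≤ ∑ x ∈ n.divisorsAntidiagonal,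
            ((ArithmeticFunction.moebius x.1 : ℤ) • a x.2).natAbs :=
          natAbs_sum_le' _ _
      _ ≤ ∑ x ∈ n.divisorsAntidiagonal, (a x.2).natAbs := by
          apply Finset.sum_le_sum
          intro x hx
          rw [smul_eq_mul, Int.natAbs_mul]
          calc (ArithmeticFunction.moebius x.1).natAbs * (a x.2).natAbs
              ≤ 1 * (a x.2).natAbs := Nat.mul_le_mul_right _ (hmu x.1)
            _ = (a x.2).natAbs := one_mul _
      _ = ∑ k ∈ (n.divisorsAntidiagonal.image Prod.snd), (a k).natAbs := by
          rw [Finset.sum_image]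
          intro x hx y hy hxy
          obtain ⟨hx1, hx2⟩ := Nat.mem_divisorsAntidiagonal.mp hx
          obtain ⟨hy1, hy2⟩ := Nat.mem_divisorsAntidiagonal.mp hy
          have hsnd : x.2 ≠ 0 := by
            intro h0; rw [h0, mul_zero] at hx1; exact hx2 hx1.symm
          have : x.1 = y.1 := by
            apply Nat.eq_of_mul_eq_mul_right (Nat.pos_of_ne_zero hsnd)
            rw [hx1, hxy] at *
            rw [← hxy] at hy1
            omega
          exact Prod.ext this hxy
      _ = ∑ k ∈ n.divisors, (a k).natAbs := by
          rw [Nat.image_snd_divisorsAntidiagonal]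
      _ ≤ ∑ k ∈ range (n + 1), (a k).natAbs := by
          apply Finset.sum_le_sum_of_subset
          intro k hk
          exact Finset.mem_range.mpr (Nat.lt_succ_of_le (Nat.divisor_le hk))
  have hB_bound : ∀ n : ℕ, 1 ≤ n →
      (b n).natAbs ≤ (n + 1) ^ 2 * ∑ k ∈ range (n + 1), (a k).natAbs := by
    intro n hn
    calc (b n).natAbs ≤ n * (b n).natAbs := Nat.le_mul_of_pos_left _ hn
      _ ≤ ∑ k ∈ range (n + 1), (a k).natAbs := hnb n hn
      _ ≤ (n + 1) ^ 2 * ∑ k ∈ range (n + 1), (a k).natAbs :=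
          Nat.le_mul_of_pos_left _ (by positivity)
  have hA_bound : ∀ n : ℕ, 1 ≤ n →
      (a n).natAbs ≤ (n + 1) ^ 2 * ∑ k ∈ range (n + 1), (b k).natAbs := by
    intro n hn
    calc (a n).natAbs = (∑ k ∈ n.divisors, (k : ℤ) * b k).natAbs := by rw [hab n hn]
      _ ≤ ∑ k ∈ n.divisors, ((k : ℤ) * b k).natAbs := natAbs_sum_le' _ _
      _ = ∑ k ∈ n.divisors, k * (b k).natAbs := by
          apply Finset.sum_congr rfl
          intro k _
          rw [Int.natAbs_mul, Int.natAbs_natCast]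
      _ ≤ ∑ k ∈ n.divisors, n * (b k).natAbs := by
          apply Finset.sum_le_sum
          intro k hk
          exact Nat.mul_le_mul_right _ (Nat.divisor_le hk)
      _ ≤ ∑ k ∈ range (n + 1), n * (b k).natAbs := by
          apply Finset.sum_le_sum_of_subset
          intro k hk
          exact Finset.mem_range.mpr (Nat.lt_succ_of_le (Nat.divisor_le hk))
      _ = n * ∑ k ∈ range (n + 1), (b k).natAbs := by rw [Finset.mul_sum]
      _ ≤ (n + 1) ^ 2 * ∑ k ∈ range (n + 1), (b k).natAbs := by
          apply Nat.mul_le_mul_right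
          nlinarith
  -- 1 ≤ B
  have hsetB : {n : ℕ | (b n).natAbs ≠ 0} = {n : ℕ | b n ≠ 0} := by
    ext n; simp [Int.natAbs_ne_zero]
  have hB1 : 1 ≤ atTop.limsup (fun n : ℕ => (((b n).natAbs : ℝ≥0∞)) ^ (1 / (n : ℝ))) :=
    one_le_limsup_rpow (fun n => (b n).natAbs) (by rw [hsetB]; exact hinf)
  -- 1 ≤ A
  have hA1 : 1 ≤ atTop.limsup (fun n : ℕ => (((a n).natAbs : ℝ≥0∞)) ^ (1 / (n : ℝ))) := by
    by_contra hc
    push_neg at hc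
    obtain ⟨N0, hN0⟩ := eventually_atTop.mp (eventually_lt_of_limsup_lt hc)
    set N : ℕ := max N0 1 with hNdef
    have ha0 : ∀ n : ℕ, N ≤ n → a n = 0 := by
      intro n hn
      have hn1 : 1 ≤ n := le_trans (le_max_right _ _) hn
      by_contra ha
      have h1 : (1 : ℝ≥0∞) ≤ ((a n).natAbs : ℝ≥0∞) ^ (1 / (n : ℝ)) := by
        calc (1 : ℝ≥0∞) = 1 ^ (1 / (n : ℝ)) := (ENNReal.one_rpow _).symm
          _ ≤ ((a n).natAbs : ℝ≥0∞) ^ (1 / (n : ℝ)) := by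
              apply ENNReal.rpow_le_rpow _ (by positivity)
              exact_mod_cast Nat.one_le_iff_ne_zero.mpr (Int.natAbs_ne_zero.mpr ha)
      exact absurd (hN0 n (le_trans (le_max_left _ _) hn)) (not_lt.mpr h1)
    set S : ℕ := ∑ k ∈ range N, (a k).natAbs with hSdef
    have hb0 : ∀ n : ℕ, max N S < n → b n = 0 := by
      intro n hn
      have hnN : N ≤ n := le_of_lt (lt_of_le_of_lt (le_max_left _ _) hn)
      have hnS : S < n := lt_of_le_of_lt (le_max_right _ _) hn
      have hn1 : 1 ≤ n := le_trans (le_max_right _ _) hnN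
      have hkey : n * (b n).natAbs ≤ S := by
        calc n * (b n).natAbs ≤ ∑ k ∈ range (n + 1), (a k).natAbs := hnb n hn1
          _ = S := by
            rw [← Finset.sum_range_add_sum_Ico _ (show N ≤ n + 1 by omega)]
            have hz : ∑ k ∈ Ico N (n + 1), (a k).natAbs = 0 := by
              apply Finset.sum_eq_zero
              intro k hk
              rw [ha0 k (Finset.mem_Ico.mp hk).1]
              rfl
            rw [hz, add_zero, hSdef]
      rcases Nat.eq_zero_or_pos (b n).natAbs with h0 | hpos
      · exact Int.natAbs_eq_zero.mp h0
      · exfalso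
        have : n ≤ n * (b n).natAbs := Nat.le_mul_of_pos_right _ hpos
        omega
    obtain ⟨m, hm, hm2⟩ := hinf.exists_gt (max N S)
    exact hm (hb0 m hm2)
  exact le_antisymm
    (key_le (fun n => (a n).natAbs) (fun n => (b n).natAbs) hB1 hA_bound)
    (key_le (fun n => (b n).natAbs) (fun n => (a n).natAbs) hA1 hB_bound)
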